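/- Let B ⊂ ℝ² be a convex lattice polygon with minimal lattice width ω(B) = 2k+1 for a nonnegative integer k. Then area(B) ≥ (3k² + 3k + 1)/2. -/

import Mathlib

open Finset Set MeasureTheory

/-- Embedding of lattice points into the real plane. -/
def toR (p : ℤ × ℤ) : ℝ × ℝ := ((p.1 : ℝ), (p.2 : ℝ))

/-- Integer pairing `u ⋅ p`. -/
def zdot (u p : ℤ × ℤ) : ℤ := u.1 * p.1 + u.2 * p.2

/-- The lattice width of the lattice polygon with vertex set `S` in the direction `u`. -/
def widthZ (u : ℤ × ℤ) (S : Finset (ℤ × ℤ)) (h : S.Nonempty) : ℤ :=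
  S.sup' h (zdot u) - S.inf' h (zdot u)

/-- The Euclidean area of the convex hull of the lattice points `S`. -/
noncomputable def areaOf (S : Finset (ℤ × ℤ)) : ℝ :=
  (volume (convexHull ℝ (toR '' (S : Set (ℤ × ℤ))))).toReal

noncomputable section

namespace LatticeWidth

def stdTri : Set (ℝ × ℝ) := {((0:ℝ),(0:ℝ)), ((1:ℝ),(0:ℝ)), ((0:ℝ),(1:ℝ))}

lemma mem0 : ((0:ℝ),(0:ℝ)) ∈ stdTri := Or.inl rfl
lemma mem1 : ((1:ℝ),(0:ℝ)) ∈ stdTri := Or.inr (Or.inl rfl)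
lemma mem2 : ((0:ℝ),(1:ℝ)) ∈ stdTri := Or.inr (Or.inr rfl)

lemma half_le_vol_std :
    ENNReal.ofReal (1/2) ≤ volume (convexHull ℝ stdTri) := by
  have hsub : regionBetween (fun _ : ℝ => (0:ℝ)) (fun x => 1 - x) (Set.Ioo 0 1)
      ⊆ convexHull ℝ stdTri := by
    rintro ⟨x, y⟩ ⟨hx, hy⟩
    simp only [Set.mem_Ioo] at hx hy
    have hx0 : 0 < x := hx.1
    have hy0 : 0 < y := by simpa using hy.1
    have hxy : x + y < 1 := by have := hy.2; linarith
    set c : ℝ := x + y with hc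
    have hc0 : 0 < c := by positivity
    have z_mem : ((x/c, y/c) : ℝ×ℝ) ∈ convexHull ℝ stdTri := by
      have hseg : ((x/c, y/c) : ℝ×ℝ) ∈ segment ℝ ((1:ℝ),(0:ℝ)) ((0:ℝ),(1:ℝ)) := by
        refine ⟨x/c, y/c, by positivity, by positivity, by field_simp; exact hc.symm, ?_⟩
        simp [Prod.ext_iff]
      exact (convex_convexHull ℝ stdTri).segment_subset
        (subset_convexHull ℝ stdTri mem1) (subset_convexHull ℝ stdTri mem2) hseg
    have hseg2 : ((x, y) : ℝ×ℝ) ∈ segment ℝ ((0:ℝ),(0:ℝ)) ((x/c, y/c) : ℝ×ℝ) := by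
      refine ⟨1 - c, c, by linarith, le_of_lt hc0, by ring, ?_⟩
      simp only [Prod.smul_mk, smul_eq_mul, mul_zero, Prod.mk_add_mk, Prod.mk.injEq]
      constructor <;> field_simp <;> ring
    exact (convex_convexHull ℝ stdTri).segment_subset
      (subset_convexHull ℝ stdTri mem0) z_mem hseg2
  have hint1 : IntegrableOn (fun _ : ℝ => (0:ℝ)) (Set.Ioo 0 1) volume := by
    simp [IntegrableOn]
  have hint2 : IntegrableOn (fun x : ℝ => 1 - x) (Set.Ioo 0 1) volume :=
    ((continuous_const.sub continuous_id).continuousOn.integrableOn_Icc).mono_set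
      Set.Ioo_subset_Icc_self
  have hreg := volume_regionBetween_eq_integral hint1 hint2 measurableSet_Ioo
    (fun x hx => by simp only [Set.mem_Ioo] at hx; linarith [hx.2])
  have hval : (∫ y in Set.Ioo (0:ℝ) 1, ((fun x : ℝ => 1 - x) - (fun _ : ℝ => (0:ℝ))) y) = 1/2 := by
    have : ((fun x : ℝ => 1 - x) - (fun _ : ℝ => (0:ℝ))) = fun x : ℝ => 1 - x := by
      funext z; simp
    rw [this, ← MeasureTheory.integral_Ioc_eq_integral_Ioo,
      ← intervalIntegral.integral_of_le (by norm_num : (0:ℝ) ≤ 1),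
      intervalIntegral.integral_sub intervalIntegrable_const
        intervalIntegral.intervalIntegrable_id,
      integral_id, intervalIntegral.integral_const]
    norm_num
  have h2 : volume (regionBetween (fun _ : ℝ => (0:ℝ)) (fun x => 1 - x) (Set.Ioo 0 1))
      = ENNReal.ofReal (1/2) := by
    rw [MeasureTheory.Measure.volume_eq_prod, hreg, hval]
  rw [← h2]
  exact measure_mono hsub

def detR2 (u v : ℝ × ℝ) : ℝ := u.1 * v.2 - u.2 * v.1

lemma vol_triangle_ge (A B C : ℝ × ℝ) :
    ENNReal.ofReal (|detR2 (B - A) (C - A)| / 2) ≤ volume (convexHull ℝ {A, B, C}) := by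
  set f := Matrix.toLin (Module.Basis.finTwoProd ℝ) (Module.Basis.finTwoProd ℝ)
      !![(B - A).1, (C - A).1; (B - A).2, (C - A).2] with hf
  have hfapp : ∀ x : ℝ × ℝ,
      f x = ((B-A).1 * x.1 + (C-A).1 * x.2, (B-A).2 * x.1 + (C-A).2 * x.2) :=
    fun x => Matrix.toLin_finTwoProd_apply _ _ _ _ x
  have hdet : LinearMap.det f = detR2 (B - A) (C - A) := by
    rw [hf, LinearMap.det_toLin, Matrix.det_fin_two_of]; unfold detR2; ring
  have himgset : f '' stdTri = {0, B - A, C - A} := by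
    unfold stdTri
    rw [Set.image_insert_eq, Set.image_insert_eq, Set.image_singleton]
    congr 1
    · rw [hfapp]; simp
    congr 1
    · rw [hfapp]; simp [Prod.ext_iff]
    · rw [hfapp]; simp [Prod.ext_iff]
  have htrans : (fun x => A + x) '' convexHull ℝ ({0, B - A, C - A} : Set (ℝ×ℝ))
      = convexHull ℝ {A, B, C} := by
    have heq := (AffineEquiv.constVAdd ℝ (ℝ×ℝ) A).toAffineMap.image_convexHull
      ({0, B - A, C - A} : Set (ℝ×ℝ))
    have happ : ⇑(AffineEquiv.constVAdd ℝ (ℝ×ℝ) A).toAffineMap = fun x => A + x := by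
      funext x
      rfl
    rw [happ] at heq
    rw [heq]
    congr 1
    rw [Set.image_insert_eq, Set.image_insert_eq, Set.image_singleton]
    simp
  have hhull : volume (convexHull ℝ ({A, B, C} : Set (ℝ×ℝ)))
      = ENNReal.ofReal |detR2 (B - A) (C - A)| * volume (convexHull ℝ stdTri) := by
    rw [← htrans, Set.image_add_left, measure_preimage_add, ← himgset,
      ← f.image_convexHull stdTri, Measure.addHaar_image_linearMap, hdet]
  rw [hhull]
  calc ENNReal.ofReal (|detR2 (B - A) (C - A)| / 2)
      = ENNReal.ofReal |detR2 (B - A) (C - A)| * ENNReal.ofReal (1/2) := by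
        rw [← ENNReal.ofReal_mul (abs_nonneg _)]; ring_nf
    _ ≤ _ := mul_le_mul_right half_le_vol_std _

lemma detR2_sub (D W₁ W₂ U : ℝ × ℝ) :
    detR2 D (W₁ - W₂) = detR2 D (W₁ - U) - detR2 D (W₂ - U) := by
  unfold detR2; simp only [Prod.fst_sub, Prod.snd_sub]; ring

/-- The affine functional `p ↦ detR2 D (p - U)`. -/
def gAff (D U : ℝ × ℝ) : (ℝ × ℝ) →ᵃ[ℝ] ℝ where
  toFun := fun p => detR2 D (p - U)
  linear := D.1 • (LinearMap.snd ℝ ℝ ℝ) - D.2 • (LinearMap.fst ℝ ℝ ℝ)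
  map_vadd' := by
    intro p v
    unfold detR2
    simp [Prod.fst_add, Prod.snd_add]
    ring

lemma gAff_apply (D U p : ℝ × ℝ) : gAff D U p = detR2 D (p - U) := rfl

lemma hull_subset_halfplane_ge (D U A B C : ℝ × ℝ) (hA : 0 ≤ gAff D U A)
    (hB : 0 ≤ gAff D U B) (hC : 0 ≤ gAff D U C) :
    convexHull ℝ {A, B, C} ⊆ {p | 0 ≤ gAff D U p} := by
  apply convexHull_min
  · rintro p (rfl | rfl | rfl) <;> assumption
  · exact (convex_Ici (0:ℝ)).affine_preimage (gAff D U)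

lemma hull_subset_halfplane_le (D U A B C : ℝ × ℝ) (hA : gAff D U A ≤ 0)
    (hB : gAff D U B ≤ 0) (hC : gAff D U C ≤ 0) :
    convexHull ℝ {A, B, C} ⊆ {p | gAff D U p ≤ 0} := by
  apply convexHull_min
  · rintro p (rfl | rfl | rfl) <;> assumption
  · exact (convex_Iic (0:ℝ)).affine_preimage (gAff D U)

lemma line_null (D U : ℝ × ℝ) (hD : D ≠ 0) :
    volume {p : ℝ × ℝ | gAff D U p = 0} = 0 := by
  have hset : {p : ℝ × ℝ | gAff D U p = 0}
      = (AffineSubspace.comap (gAff D U) (AffineSubspace.mk' (0:ℝ) ⊥) : Set (ℝ × ℝ)) := by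
    ext p
    simp [AffineSubspace.mem_comap, AffineSubspace.mem_mk']
  rw [hset]
  apply Measure.addHaar_affineSubspace
  intro htop
  have hmem : U + (-D.2, D.1) ∈ (AffineSubspace.comap (gAff D U) (AffineSubspace.mk' (0:ℝ) ⊥)) := by
    rw [htop]; trivial
  rw [AffineSubspace.mem_comap, AffineSubspace.mem_mk'] at hmem
  simp only [gAff_apply, vsub_eq_sub, Submodule.mem_bot, sub_zero] at hmem
  unfold detR2 at hmem
  simp only [Prod.fst_add, Prod.snd_add, add_sub_cancel_left] at hmem
  have : D.1 * D.1 + D.2 * D.2 = 0 := by linarith [hmem]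
  have hD1 : D.1 = 0 := by nlinarith
  have hD2 : D.2 = 0 := by nlinarith
  exact hD (Prod.ext hD1 hD2)



lemma areaOf_nonneg (S : Finset (ℤ × ℤ)) : 0 ≤ areaOf S := ENNReal.toReal_nonneg

lemma vol_hull_ne_top (S : Finset (ℤ × ℤ)) :
    volume (convexHull ℝ (toR '' (S : Set (ℤ × ℤ)))) ≠ ⊤ :=
  ((((S : Set (ℤ × ℤ)).toFinite.image toR).isCompact_convexHull ℝ).measure_lt_top).ne

lemma tri_le_area (S : Finset (ℤ × ℤ)) (A B C : ℝ × ℝ)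
    (hA : A ∈ toR '' (S : Set (ℤ × ℤ))) (hB : B ∈ toR '' (S : Set (ℤ × ℤ)))
    (hC : C ∈ toR '' (S : Set (ℤ × ℤ))) :
    |detR2 (B - A) (C - A)| / 2 ≤ areaOf S := by
  have hsub : convexHull ℝ {A, B, C} ⊆ convexHull ℝ (toR '' (S : Set (ℤ × ℤ))) := by
    apply convexHull_mono
    rintro p (rfl | rfl | rfl) <;> assumption
  have h1 := (vol_triangle_ge A B C).trans (measure_mono hsub)
  have h2 := ENNReal.toReal_mono (vol_hull_ne_top S) h1
  rwa [ENNReal.toReal_ofReal (by positivity)] at h2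

lemma detR2_self (D : ℝ × ℝ) : detR2 D D = 0 := by unfold detR2; ring

lemma fan_one_sided (S : Finset (ℤ × ℤ)) (U V W₁ W₂ : ℝ × ℝ)
    (hU : U ∈ toR '' (S : Set (ℤ × ℤ))) (hV : V ∈ toR '' (S : Set (ℤ × ℤ)))
    (hW₁ : W₁ ∈ toR '' (S : Set (ℤ × ℤ))) (hW₂ : W₂ ∈ toR '' (S : Set (ℤ × ℤ))) :
    detR2 (V - U) (W₁ - W₂) ≤ 2 * areaOf S := by
  set D := V - U with hD
  rcases le_or_gt (detR2 D (W₁ - W₂)) 0 with hle | hpos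
  · linarith [areaOf_nonneg S]
  have hdiff : detR2 D (W₁ - W₂) = detR2 D (W₁ - U) - detR2 D (W₂ - U) := detR2_sub D W₁ W₂ U
  set g₁ := detR2 D (W₁ - U) with hg₁
  set g₂ := detR2 D (W₂ - U) with hg₂
  rcases le_or_gt 0 g₂ with hg₂0 | hg₂0
  · -- diff ≤ g₁ ≤ |g₁| ≤ 2 area
    have := tri_le_area S U V W₁ hU hV hW₁
    have habs : g₁ ≤ |detR2 (V - U) (W₁ - U)| := le_abs_self _
    linarith [hdiff ▸ hpos]
  rcases le_or_gt g₁ 0 with hg₁0 | hg₁0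
  · have := tri_le_area S U V W₂ hU hV hW₂
    have habs : -g₂ ≤ |detR2 (V - U) (W₂ - U)| := neg_le_abs _
    linarith
  -- two-triangle case
  have hDne : D ≠ 0 := by
    intro h0
    rw [hg₁, h0] at hg₁0
    unfold detR2 at hg₁0
    simp at hg₁0
  set T₁ := convexHull ℝ ({U, V, W₁} : Set (ℝ × ℝ)) with hT₁
  set T₂ := convexHull ℝ ({U, V, W₂} : Set (ℝ × ℝ)) with hT₂
  have hgU : gAff D U U = 0 := by rw [gAff_apply]; simp [detR2]
  have hgV : gAff D U V = 0 := by rw [gAff_apply, ← hD, detR2_self]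
  have h₁sub : T₁ ⊆ {p | 0 ≤ gAff D U p} :=
    hull_subset_halfplane_ge D U U V W₁ (le_of_eq hgU.symm) (le_of_eq hgV.symm)
      (by rw [gAff_apply]; exact le_of_lt hg₁0)
  have h₂sub : T₂ ⊆ {p | gAff D U p ≤ 0} :=
    hull_subset_halfplane_le D U U V W₂ (le_of_eq hgU) (le_of_eq hgV)
      (by rw [gAff_apply]; exact le_of_lt hg₂0)
  have hinter : volume (T₁ ∩ T₂) = 0 := by
    refine measure_mono_null ?_ (line_null D U hDne)
    rintro p ⟨hp₁, hp₂⟩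
    exact le_antisymm (h₂sub hp₂) (h₁sub hp₁)
  have hT₂meas : MeasurableSet T₂ :=
    ((Set.toFinite _).isCompact_convexHull ℝ).measurableSet
  have hunion : volume (T₁ ∪ T₂) = volume T₁ + volume T₂ := by
    have := measure_union_add_inter (μ := volume) T₁ hT₂meas
    rw [hinter, add_zero] at this
    exact this
  have hsubbig : T₁ ∪ T₂ ⊆ convexHull ℝ (toR '' (S : Set (ℤ × ℤ))) := by
    apply Set.union_subset <;>
      · apply convexHull_mono
        rintro p (rfl | rfl | rfl) <;> assumption
  have hv₁ : ENNReal.ofReal (g₁ / 2) ≤ volume T₁ := by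
    refine le_trans ?_ (vol_triangle_ge U V W₁)
    apply ENNReal.ofReal_le_ofReal
    have h := le_abs_self (detR2 (V - U) (W₁ - U))
    rw [← hD, ← hg₁] at h
    linarith
  have hv₂ : ENNReal.ofReal (-g₂ / 2) ≤ volume T₂ := by
    refine le_trans ?_ (vol_triangle_ge U V W₂)
    apply ENNReal.ofReal_le_ofReal
    have h := neg_le_abs (detR2 (V - U) (W₂ - U))
    rw [← hD, ← hg₂] at h
    linarith
  have hvol : ENNReal.ofReal (g₁ / 2 + -g₂ / 2)
      ≤ volume (convexHull ℝ (toR '' (S : Set (ℤ × ℤ)))) := by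
    rw [ENNReal.ofReal_add (by linarith) (by linarith)]
    calc ENNReal.ofReal (g₁ / 2) + ENNReal.ofReal (-g₂ / 2)
        ≤ volume T₁ + volume T₂ := add_le_add hv₁ hv₂
      _ = volume (T₁ ∪ T₂) := hunion.symm
      _ ≤ _ := measure_mono hsubbig
  have hfin := ENNReal.toReal_mono (vol_hull_ne_top S) hvol
  rw [ENNReal.toReal_ofReal (by linarith)] at hfin
  have : g₁ / 2 + -g₂ / 2 ≤ areaOf S := hfin
  linarith


def jdet (u v : ℤ × ℤ) : ℤ := u.1 * v.2 - u.2 * v.1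

lemma fan_abs (S : Finset (ℤ × ℤ)) (U V W₁ W₂ : ℤ × ℤ)
    (hU : U ∈ S) (hV : V ∈ S) (hW₁ : W₁ ∈ S) (hW₂ : W₂ ∈ S) :
    |(jdet (V - U) (W₁ - W₂) : ℝ)| ≤ 2 * areaOf S := by
  have hmem : ∀ P ∈ S, toR P ∈ toR '' (S : Set (ℤ × ℤ)) :=
    fun P hP => Set.mem_image_of_mem toR (Finset.mem_coe.mpr hP)
  have hcast : (jdet (V - U) (W₁ - W₂) : ℝ) = detR2 (toR V - toR U) (toR W₁ - toR W₂) := by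
    unfold jdet detR2 toR
    simp only [Prod.fst_sub, Prod.snd_sub]
    push_cast
    ring
  rw [hcast, abs_le]
  constructor
  · have h := fan_one_sided S (toR U) (toR V) (toR W₂) (toR W₁)
      (hmem U hU) (hmem V hV) (hmem W₂ hW₂) (hmem W₁ hW₁)
    have : detR2 (toR V - toR U) (toR W₂ - toR W₁)
        = -detR2 (toR V - toR U) (toR W₁ - toR W₂) := by
      unfold detR2; simp only [Prod.fst_sub, Prod.snd_sub]; ring
    linarith [this ▸ h]
  · exact fan_one_sided S (toR U) (toR V) (toR W₁) (toR W₂)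
      (hmem U hU) (hmem V hV) (hmem W₁ hW₁) (hmem W₂ hW₂)

/-- Any "width-coordinate determinant" of points of `S` is bounded by twice the area,
provided the coordinate system `(zdot v, zdot u)` is unimodular. -/
lemma cert_bound (S : Finset (ℤ × ℤ)) (u v A B C D : ℤ × ℤ)
    (hdet : u.1 * v.2 - u.2 * v.1 = 1 ∨ u.1 * v.2 - u.2 * v.1 = -1)
    (hA : A ∈ S) (hB : B ∈ S) (hC : C ∈ S) (hD : D ∈ S) :
    (((zdot v A - zdot v B) * (zdot u C - zdot u D)
      - (zdot u A - zdot u B) * (zdot v C - zdot v D) : ℤ) : ℝ) ≤ 2 * areaOf S := by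
  set X : ℤ := (zdot v A - zdot v B) * (zdot u C - zdot u D)
      - (zdot u A - zdot u B) * (zdot v C - zdot v D) with hX
  have hid : X = -(u.1 * v.2 - u.2 * v.1) * jdet (A - B) (C - D) := by
    rw [hX]
    unfold zdot jdet
    simp only [Prod.fst_sub, Prod.snd_sub]
    ring
  have habs : (X : ℝ) ≤ |(jdet (A - B) (C - D) : ℝ)| := by
    rcases hdet with h | h
    · rw [hid, h]
      push_cast
      rw [neg_one_mul]
      exact (neg_le_abs _)
    · rw [hid, h]
      push_cast
      simp only [neg_neg, one_mul]
      exact le_abs_self _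
  exact habs.trans (fan_abs S B A C D hB hA hC hD)

/-- The integer core: one of the three certificates is large. -/
lemma algebra_core (a b p q s e : ℤ) (ha : 0 < a) (hab : a ≤ b)
    (hp : 0 ≤ p) (hpa : p ≤ a) (hq : 0 ≤ q) (hqb : q ≤ b)
    (heb : e ≤ b) (hes : b ≤ e + s) :
    4 * a * b - a ^ 2 ≤ 4 * (a * b - p * q)
    ∨ 4 * a * b - a ^ 2 ≤ 4 * (a * e + q * s)
    ∨ 4 * a * b - a ^ 2 ≤ 4 * (p * e + b * s) := by
  by_contra hcon
  push_neg at hcon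
  obtain ⟨h1, h2, h3⟩ := hcon
  have hs0 : 0 ≤ s := by linarith
  have h1' : a ^ 2 < 4 * (p * q) := by linarith
  have h2' : a ^ 2 < 4 * (s * (a - q)) := by nlinarith [mul_le_mul_of_nonneg_left hes ha.le]
  have hqa : q < a := by nlinarith
  have hsp : 0 < s := by nlinarith
  have hp0 : 0 < p := by nlinarith
  have hpa4 : a < 4 * p := by nlinarith
  have h3' : 4 * (p * b) + 4 * (s * (b - p)) < 4 * a * b - a ^ 2 := by
    nlinarith [mul_le_mul_of_nonneg_left hes hp]
  have hw : 0 < a - q := sub_pos.mpr hqa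
  have hB : 4 * (p * (a - q)) < a * (4 * p - a) := by nlinarith
  have hkey : p * a < s * (4 * p - a) := by
    by_contra hk
    push_neg at hk
    have c1 : (4 * (a - q)) * (s * (4 * p - a)) ≤ (4 * (a - q)) * (p * a) :=
      mul_le_mul_of_nonneg_left hk (by linarith)
    have c2 : a ^ 2 * (4 * p - a) < (4 * (s * (a - q))) * (4 * p - a) :=
      mul_lt_mul_of_pos_right h2' (by linarith)
    have c3 : (4 * (p * (a - q))) * a < (a * (4 * p - a)) * a :=
      mul_lt_mul_of_pos_right hB ha
    nlinarith [c1, c2, c3]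
  have m1 : (0:ℤ) < 4 * p - a := by linarith
  have m2 : (0:ℤ) ≤ b - p := by linarith
  have step1 : (4 * p - a) * (4 * (p * b) + 4 * (s * (b - p)))
      < (4 * p - a) * (4 * a * b - a ^ 2) := mul_lt_mul_of_pos_left h3' m1
  have step2 : (4 * (b - p)) * (p * a) ≤ (4 * (b - p)) * (s * (4 * p - a)) :=
    mul_le_mul_of_nonneg_left hkey.le (by linarith)
  nlinarith [step1, step2, mul_nonneg (sq_nonneg (2 * p - a)) (by linarith : (0:ℤ) ≤ 4 * b - a)]




lemma zdot_add (u v p : ℤ × ℤ) : zdot (u + v) p = zdot u p + zdot v p := by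
  simp [zdot]; ring

lemma zdot_sub (u v p : ℤ × ℤ) : zdot (u - v) p = zdot u p - zdot v p := by
  simp [zdot]; ring

lemma zdot_neg (u p : ℤ × ℤ) : zdot (-u) p = -zdot u p := by
  simp [zdot]; ring

lemma zdot_smul (c : ℤ) (u p : ℤ × ℤ) : zdot (c * u.1, c * u.2) p = c * zdot u p := by
  simp [zdot]; ring

lemma widthZ_nonneg (S : Finset (ℤ × ℤ)) (h : S.Nonempty) (u : ℤ × ℤ) : 0 ≤ widthZ u S h := by
  unfold widthZ
  obtain ⟨p, hp⟩ := h
  have h1 := Finset.inf'_le (b := p) (zdot u) hp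
  have h2 := Finset.le_sup' (b := p) (zdot u) hp
  omega

lemma widthZ_neg (S : Finset (ℤ × ℤ)) (h : S.Nonempty) (u : ℤ × ℤ) : widthZ (-u) S h = widthZ u S h := by
  unfold widthZ
  have h1 : S.sup' h (zdot (-u)) = -S.inf' h (zdot u) := by
    apply le_antisymm
    · apply Finset.sup'_le
      intro p hp
      have := Finset.inf'_le (zdot u) hp
      rw [zdot_neg]; omega
    · obtain ⟨p, hp, hval⟩ := Finset.exists_mem_eq_inf' h (zdot u)
      have := Finset.le_sup' (zdot (-u)) hp
      rw [zdot_neg] at this; omega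
  have h2 : S.inf' h (zdot (-u)) = -S.sup' h (zdot u) := by
    apply le_antisymm
    · obtain ⟨p, hp, hval⟩ := Finset.exists_mem_eq_sup' h (zdot u)
      have := Finset.inf'_le (zdot (-u)) hp
      rw [zdot_neg] at this; omega
    · apply Finset.le_inf'
      intro p hp
      have := Finset.le_sup' (zdot u) hp
      rw [zdot_neg]; omega
  rw [h1, h2]; ring

lemma widthZ_add_le (S : Finset (ℤ × ℤ)) (h : S.Nonempty) (u v : ℤ × ℤ) :
    widthZ (u + v) S h ≤ widthZ u S h + widthZ v S h := by
  unfold widthZ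
  have hsup : S.sup' h (zdot (u + v)) ≤ S.sup' h (zdot u) + S.sup' h (zdot v) := by
    apply Finset.sup'_le
    intro p hp
    rw [zdot_add]
    exact add_le_add (Finset.le_sup' (zdot u) hp) (Finset.le_sup' (zdot v) hp)
  have hinf : S.inf' h (zdot u) + S.inf' h (zdot v) ≤ S.inf' h (zdot (u + v)) := by
    apply Finset.le_inf'
    intro p hp
    rw [zdot_add]
    exact add_le_add (Finset.inf'_le (zdot u) hp) (Finset.inf'_le (zdot v) hp)
  omega

lemma widthZ_sub_le (S : Finset (ℤ × ℤ)) (h : S.Nonempty) (u v : ℤ × ℤ) :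
    widthZ (u - v) S h ≤ widthZ u S h + widthZ v S h := by
  have := widthZ_add_le S h u (-v)
  rw [widthZ_neg] at this
  simpa [sub_eq_add_neg] using this

lemma widthZ_smul (S : Finset (ℤ × ℤ)) (h : S.Nonempty) (c : ℤ) (hc : 0 ≤ c) (u : ℤ × ℤ) :
    widthZ (c * u.1, c * u.2) S h = c * widthZ u S h := by
  unfold widthZ
  have h1 : S.sup' h (zdot (c * u.1, c * u.2)) = c * S.sup' h (zdot u) := by
    apply le_antisymm
    · apply Finset.sup'_le
      intro p hp
      rw [zdot_smul]
      exact mul_le_mul_of_nonneg_left (Finset.le_sup' (zdot u) hp) hc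
    · obtain ⟨p, hp, hval⟩ := Finset.exists_mem_eq_sup' h (zdot u)
      have h2 := Finset.le_sup' (zdot (c * u.1, c * u.2)) hp
      rw [zdot_smul] at h2
      rw [hval]
      exact h2
  have h2 : S.inf' h (zdot (c * u.1, c * u.2)) = c * S.inf' h (zdot u) := by
    apply le_antisymm
    · obtain ⟨p, hp, hval⟩ := Finset.exists_mem_eq_inf' h (zdot u)
      have h2 := Finset.inf'_le (zdot (c * u.1, c * u.2)) hp
      rw [zdot_smul] at h2
      rw [hval]
      exact h2
    · apply Finset.le_inf'
      intro p hp
      rw [zdot_smul]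
      exact mul_le_mul_of_nonneg_left (Finset.inf'_le (zdot u) hp) hc
  rw [h1, h2]; ring


lemma slant_case (S : Finset (ℤ × ℤ)) (u v : ℤ × ℤ)
    (hdet : u.1 * v.2 - u.2 * v.1 = 1 ∨ u.1 * v.2 - u.2 * v.1 = -1)
    (R L T Bo N E : ℤ × ℤ) (hR : R ∈ S) (hL : L ∈ S) (hT : T ∈ S) (hBo : Bo ∈ S)
    (hN : N ∈ S) (hE : E ∈ S)
    (hRmax : ∀ P ∈ S, zdot v P ≤ zdot v R) (hLmin : ∀ P ∈ S, zdot v L ≤ zdot v P)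
    (hTmax : ∀ P ∈ S, zdot u P ≤ zdot u T) (hBmin : ∀ P ∈ S, zdot u Bo ≤ zdot u P)
    (ha : 0 < zdot u T - zdot u Bo)
    (hab : zdot u T - zdot u Bo ≤ zdot v R - zdot v L)
    (hdiag : zdot v R - zdot v L ≤ (zdot v E - zdot u E) - (zdot v N - zdot u N))
    (hp : 0 ≤ zdot u R - zdot u L) (hq : 0 ≤ zdot v T - zdot v Bo) :
    ∃ C : ℤ, (C : ℝ) ≤ 2 * areaOf S ∧
      4 * (zdot u T - zdot u Bo) * (zdot v R - zdot v L) - (zdot u T - zdot u Bo) ^ 2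
        ≤ 4 * C := by
  set a := zdot u T - zdot u Bo with h_a
  set b := zdot v R - zdot v L with h_b
  set p := zdot u R - zdot u L with h_p
  set q := zdot v T - zdot v Bo with h_q
  set e := zdot v E - zdot v N with h_e
  set s := zdot u N - zdot u E with h_s
  have hpa : p ≤ a := by
    have h1 := hTmax R hR
    have h2 := hBmin L hL
    omega
  have hqb : q ≤ b := by
    have h1 := hRmax T hT
    have h2 := hLmin Bo hBo
    omega
  have heb : e ≤ b := by
    have h1 := hRmax E hE
    have h2 := hLmin N hN
    omega
  have hes : b ≤ e + s := by omega
  rcases algebra_core a b p q s e ha hab hp hpa hq hqb heb hes with h1 | h2 | h3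
  · refine ⟨_, cert_bound S u v R L T Bo hdet hR hL hT hBo, ?_⟩
    nlinarith [h1]
  · refine ⟨_, cert_bound S u v E N T Bo hdet hE hN hT hBo, ?_⟩
    nlinarith [h2]
  · refine ⟨_, cert_bound S u v R L N E hdet hR hL hN hE, ?_⟩
    nlinarith [h3]

/-- The central geometric estimate. -/
lemma area_core (S : Finset (ℤ × ℤ)) (h : S.Nonempty) (u v : ℤ × ℤ)
    (hdet : u.1 * v.2 - u.2 * v.1 = 1)
    (ha : 0 < widthZ u S h)
    (hb : widthZ u S h ≤ widthZ v S h)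
    (hc1 : widthZ v S h ≤ widthZ (v + u) S h)
    (hc2 : widthZ v S h ≤ widthZ (v - u) S h) :
    ∃ C : ℤ, (C : ℝ) ≤ 2 * areaOf S ∧
      4 * widthZ u S h * widthZ v S h - (widthZ u S h) ^ 2 ≤ 4 * C := by
  obtain ⟨R, hR, hRe⟩ := Finset.exists_mem_eq_sup' h (zdot v)
  obtain ⟨L, hL, hLe⟩ := Finset.exists_mem_eq_inf' h (zdot v)
  obtain ⟨T, hT, hTe⟩ := Finset.exists_mem_eq_sup' h (zdot u)
  obtain ⟨Bo, hBo, hBoe⟩ := Finset.exists_mem_eq_inf' h (zdot u)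
  obtain ⟨Em, hEm, hEme⟩ := Finset.exists_mem_eq_sup' h (zdot (v - u))
  obtain ⟨Nm, hNm, hNme⟩ := Finset.exists_mem_eq_inf' h (zdot (v - u))
  obtain ⟨Ep, hEp, hEpe⟩ := Finset.exists_mem_eq_sup' h (zdot (v + u))
  obtain ⟨Np, hNp, hNpe⟩ := Finset.exists_mem_eq_inf' h (zdot (v + u))
  have hRmax : ∀ P ∈ S, zdot v P ≤ zdot v R := fun P hP => hRe ▸ Finset.le_sup' (zdot v) hP
  have hLmin : ∀ P ∈ S, zdot v L ≤ zdot v P := fun P hP => hLe ▸ Finset.inf'_le (zdot v) hP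
  have hTmax : ∀ P ∈ S, zdot u P ≤ zdot u T := fun P hP => hTe ▸ Finset.le_sup' (zdot u) hP
  have hBmin : ∀ P ∈ S, zdot u Bo ≤ zdot u P := fun P hP => hBoe ▸ Finset.inf'_le (zdot u) hP
  have hwu : widthZ u S h = zdot u T - zdot u Bo := by unfold widthZ; rw [hTe, hBoe]
  have hwv : widthZ v S h = zdot v R - zdot v L := by unfold widthZ; rw [hRe, hLe]
  have hwm : widthZ (v - u) S h = zdot (v - u) Em - zdot (v - u) Nm := by
    unfold widthZ; rw [hEme, hNme]
  have hwp : widthZ (v + u) S h = zdot (v + u) Ep - zdot (v + u) Np := by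
    unfold widthZ; rw [hEpe, hNpe]
  rw [hwu, hwv]
  rw [hwu] at ha hb
  rw [hwv] at hb hc1 hc2
  rw [hwm] at hc2
  rw [hwp] at hc1
  rcases le_or_gt 0 (zdot u R - zdot u L) with hp | hp <;>
    rcases le_or_gt 0 (zdot v T - zdot v Bo) with hq | hq
  · -- both nonneg: use the (v-u) diagonal
    apply slant_case S u v (Or.inl hdet) R L T Bo Nm Em hR hL hT hBo hNm hEm
      hRmax hLmin hTmax hBmin ha hb ?_ hp hq
    have h1 : zdot (v - u) Em = zdot v Em - zdot u Em := zdot_sub v u Em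
    have h2 : zdot (v - u) Nm = zdot v Nm - zdot u Nm := zdot_sub v u Nm
    omega
  · -- mixed signs: the elementary quadrilateral certificate suffices
    refine ⟨_, cert_bound S u v R L T Bo (Or.inl hdet) hR hL hT hBo, ?_⟩
    have hprod : 0 ≤ (zdot u R - zdot u L) * (-(zdot v T - zdot v Bo)) :=
      mul_nonneg hp (by omega)
    nlinarith [sq_nonneg (zdot u T - zdot u Bo)]
  · refine ⟨_, cert_bound S u v R L T Bo (Or.inl hdet) hR hL hT hBo, ?_⟩
    have hprod : 0 ≤ (-(zdot u R - zdot u L)) * (zdot v T - zdot v Bo) :=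
      mul_nonneg (by omega) hq
    nlinarith [sq_nonneg (zdot u T - zdot u Bo)]
  · -- both negative: reflect v ↦ -v and use the (v+u) diagonal
    have hdet' : u.1 * (-v).2 - u.2 * (-v).1 = -1 := by
      simp only [Prod.fst_neg, Prod.snd_neg]
      linarith [hdet]
    have hzneg : ∀ P : ℤ × ℤ, zdot (-v) P = -zdot v P := fun P => zdot_neg v P
    obtain ⟨C, hC1, hC2⟩ := slant_case S u (-v) (Or.inr hdet') L R T Bo Ep Np
      hL hR hT hBo hEp hNp
      (fun P hP => by rw [hzneg, hzneg]; exact neg_le_neg (hLmin P hP))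
      (fun P hP => by rw [hzneg, hzneg]; exact neg_le_neg (hRmax P hP))
      hTmax hBmin ha
      (by rw [hzneg, hzneg]; omega)
      (by
        rw [hzneg, hzneg, hzneg, hzneg]
        have h1 : zdot (v + u) Ep = zdot v Ep + zdot u Ep := zdot_add v u Ep
        have h2 : zdot (v + u) Np = zdot v Np + zdot u Np := zdot_add v u Np
        omega)
      (by omega)
      (by rw [hzneg, hzneg]; omega)
    refine ⟨C, hC1, ?_⟩
    rw [hzneg, hzneg] at hC2
    nlinarith [hC2]

end LatticeWidth

end

open LatticeWidth in
theorem area_ge_of_odd_width (S : Finset (ℤ × ℤ)) (h : S.Nonempty) (k : ℕ)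
    (hmin : ∀ u : ℤ × ℤ, u ≠ 0 → (2 * k + 1 : ℤ) ≤ widthZ u S h)
    (hatt : ∃ u : ℤ × ℤ, u ≠ 0 ∧ widthZ u S h = (2 * k + 1 : ℤ)) :
    (3 * (k : ℝ) ^ 2 + 3 * (k : ℝ) + 1) / 2 ≤ areaOf S := by
  obtain ⟨u, hu0, huw⟩ := hatt
  set w : ℤ := 2 * k + 1 with hw
  have hwpos : (0 : ℤ) < w := by positivity
  -- u is primitive
  have hcop : IsCoprime u.1 u.2 := by
    rw [Int.isCoprime_iff_gcd_eq_one]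
    by_contra hg
    set g : ℕ := Int.gcd u.1 u.2 with hgdef
    have hg0 : g ≠ 0 := by
      intro hh
      rw [hgdef, Int.gcd_eq_zero_iff] at hh
      exact hu0 (Prod.ext hh.1 hh.2)
    have hg2 : 2 ≤ (g : ℤ) := by
      omega
    obtain ⟨a', ha'⟩ : ((g : ℤ)) ∣ u.1 := by rw [hgdef]; exact Int.gcd_dvd_left _ _
    obtain ⟨b', hb'⟩ : ((g : ℤ)) ∣ u.2 := by rw [hgdef]; exact Int.gcd_dvd_right _ _
    have hu' : u = ((g : ℤ) * a', (g : ℤ) * b') := Prod.ext ha' hb'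
    have hab0 : ((a', b') : ℤ × ℤ) ≠ 0 := by
      intro hz
      have hz' : a' = 0 ∧ b' = 0 := by simpa [Prod.ext_iff] using hz
      apply hu0
      rw [hu', hz'.1, hz'.2]
      simp
    have hsm := widthZ_smul S h (g : ℤ) (by positivity) (a', b')
    have : widthZ u S h = (g : ℤ) * widthZ (a', b') S h := by
      rw [hu']; exact hsm
    have hge := hmin (a', b') hab0
    nlinarith [widthZ_nonneg S h (a', b')]
  -- unimodular complement of minimal width
  have hex : ∃ v : ℤ × ℤ, u.1 * v.2 - u.2 * v.1 = 1 := by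
    obtain ⟨x, y, hxy⟩ := hcop
    refine ⟨(-y, x), ?_⟩
    simp only
    linear_combination hxy
  have hbdd : ∃ n : ℤ, ∃ v : ℤ × ℤ, u.1 * v.2 - u.2 * v.1 = 1 ∧ widthZ v S h = n := by
    obtain ⟨v, hv⟩ := hex
    exact ⟨widthZ v S h, v, hv, rfl⟩
  -- take the complement of least width
  have hlb : ∀ n : ℤ, (∃ v : ℤ × ℤ, u.1 * v.2 - u.2 * v.1 = 1 ∧ widthZ v S h = n) → w ≤ n := by
    rintro n ⟨v, hv, rfl⟩
    apply hmin
    intro hz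
    rw [hz] at hv
    simp at hv
  obtain ⟨b, ⟨v, hvdet, hvw⟩, hbleast⟩ :=
    Int.exists_least_of_bdd (P := fun n => ∃ v : ℤ × ℤ, u.1 * v.2 - u.2 * v.1 = 1 ∧
      widthZ v S h = n) ⟨w, hlb⟩ hbdd
  -- diagonal directions
  have hd1 : u.1 * (v + u).2 - u.2 * (v + u).1 = 1 := by
    simp only [Prod.fst_add, Prod.snd_add]; linear_combination hvdet
  have hd2 : u.1 * (v - u).2 - u.2 * (v - u).1 = 1 := by
    simp only [Prod.fst_sub, Prod.snd_sub]; linear_combination hvdet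
  have hc1 : widthZ v S h ≤ widthZ (v + u) S h := by
    rw [hvw]
    exact hbleast _ ⟨v + u, hd1, rfl⟩
  have hc2 : widthZ v S h ≤ widthZ (v - u) S h := by
    rw [hvw]
    exact hbleast _ ⟨v - u, hd2, rfl⟩
  have hwb : w ≤ b := hlb b ⟨v, hvdet, hvw⟩
  have hba : widthZ u S h ≤ widthZ v S h := by
    rw [huw, hvw]; exact hwb
  -- core inequality
  have hcore := area_core S h u v hvdet (by rw [huw]; exact hwpos) hba hc1 hc2
  obtain ⟨C, hC1, hC2⟩ := hcore
  rw [huw, hvw] at hC2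
  -- integer arithmetic: 4*C ≥ 4wb - w² ≥ 3w² hence C ≥ 3k²+3k+1
  have hwb : w ≤ b := hlb b ⟨v, hvdet, hvw⟩
  have h3w : 3 * w ^ 2 ≤ 4 * C := by nlinarith [hwpos, hwb]
  have hCk : 3 * (k : ℤ) ^ 2 + 3 * (k : ℤ) + 1 ≤ C := by
    have hww : w ^ 2 = 4 * ((k : ℤ) ^ 2) + 4 * (k : ℤ) + 1 := by rw [hw]; ring
    rw [hww] at h3w
    set K : ℤ := (k : ℤ) ^ 2
    omega
  have hCkR : (3 * (k : ℝ) ^ 2 + 3 * (k : ℝ) + 1) ≤ (C : ℝ) := by exact_mod_cast hCk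
  linarith [hC1]
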